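/- For any nonzero ring R and any n ≥ 2, the upper triangular matrix ring T_n(R) is not right small injective. -/

import Mathlib

/-- A right ideal `I` of `R` (viewed as a submodule of `R` over `Rᵐᵒᵖ`) is small if
`I + K ≠ R` for every proper right ideal `K`. -/
def IsSmallRightIdeal {R : Type*} [Ring R] (I : Submodule Rᵐᵒᵖ R) : Prop :=
  ∀ K : Submodule Rᵐᵒᵖ R, I ⊔ K = ⊤ → K = ⊤

/-- A right `R`-module `M` is small injective if every `R`-homomorphism from a small right
ideal of `R` to `M` extends to a homomorphism `R → M`. -/
def SmallInjective (R : Type*) [Ring R] (M : Type*) [AddCommGroup M] [Module Rᵐᵒᵖ M] : Prop :=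
  ∀ I : Submodule Rᵐᵒᵖ R, IsSmallRightIdeal I → ∀ f : I →ₗ[Rᵐᵒᵖ] M,
    ∃ g : R →ₗ[Rᵐᵒᵖ] M, ∀ x : I, g x = f x


/-- The ring `T_n(R)` of `n × n` upper triangular matrices over `R`, as a subring of the
matrix ring. -/
def upperTriangular (n : ℕ) (R : Type*) [Ring R] : Subring (Matrix (Fin n) (Fin n) R) where
  carrier := {M | ∀ i j, j < i → M i j = 0}
  zero_mem' := fun _ _ _ => rfl
  one_mem' := fun i j hij => Matrix.one_apply_ne (ne_of_lt hij).symm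
  add_mem' := by
    intro A B hA hB i j hij
    show A i j + B i j = 0
    rw [hA i j hij, hB i j hij, add_zero]
  neg_mem' := by
    intro A hA i j hij
    show -A i j = 0
    rw [hA i j hij, neg_zero]
  mul_mem' := by
    intro A B hA hB i j hij
    show (A * B) i j = 0
    rw [Matrix.mul_apply]
    refine Finset.sum_eq_zero fun k _ => ?_
    rcases lt_or_ge j k with hk | hk
    · rw [hB k j hk, mul_zero]
    · rw [hA i k (lt_of_le_of_lt hk hij), zero_mul]

/-- For any nonzero ring `R` and any `n ≥ 2`, the upper triangular matrix ring `T_n(R)`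
is not right small injective. -/
theorem stmt_19 (R : Type*) [Ring R] [Nontrivial R] (n : ℕ) (hn : 2 ≤ n) :
    ¬ SmallInjective (upperTriangular n R) (upperTriangular n R) := by
  intro hsi
  classical
  set S := upperTriangular n R with hS
  have h0 : 0 < n := by omega
  have hNlt : n - 1 < n := by omega
  let i0 : Fin n := ⟨0, h0⟩
  let iN : Fin n := ⟨n - 1, hNlt⟩
  have hi0N : i0 < iN := by show (0:ℕ) < n - 1; omega
  have hleN : ∀ b : Fin n, b ≤ iN := fun b => by
    have := b.isLt; show b.val ≤ n - 1; omega
  -- std basis matrices with last column/row are upper triangular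
  have hmemStd : ∀ (i : Fin n) (c : R), i ≤ iN → Matrix.single i iN c ∈ S := by
    intro i c hi a b hab
    simp only [Matrix.single, Matrix.of_apply]
    rw [if_neg]
    rintro ⟨rfl, rfl⟩
    exact absurd hab (not_lt.mpr hi)
  -- key computation
  have key : ∀ (i : Fin n) (c : R) (t : Matrix (Fin n) (Fin n) R),
      (∀ a b, b < a → t a b = 0) →
      Matrix.single i iN c * t = Matrix.single i iN (c * t iN iN) := by
    intro i c t ht
    ext a b
    rw [Matrix.mul_apply]
    have hsummand : ∀ k : Fin n, Matrix.single i iN c a k * t k b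
        = if iN = k then (if i = a then c * t k b else 0) else 0 := by
      intro k
      simp only [Matrix.single, Matrix.of_apply]
      by_cases h1 : i = a <;> by_cases h2 : iN = k <;> simp [h1, h2]
    rw [Finset.sum_congr rfl fun k _ => hsummand k, Finset.sum_ite_eq]
    simp only [Finset.mem_univ, if_true]
    by_cases h1 : i = a
    · simp only [if_pos h1]
      by_cases hb : iN = b
      · subst hb
        simp [Matrix.single, h1]
      · have hblt : b < iN := lt_of_le_of_ne (hleN b) (fun h => hb h.symm)
        simp [Matrix.single, hb, ht iN b hblt]
    · simp [Matrix.single, h1]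
  let E : S := ⟨Matrix.single i0 iN 1, hmemStd i0 1 (le_of_lt hi0N)⟩
  let I : Submodule Sᵐᵒᵖ S := Submodule.span Sᵐᵒᵖ {E}
  -- membership characterization
  have memI : ∀ z : S, z ∈ I ↔ (z : Matrix (Fin n) (Fin n) R)
      = Matrix.single i0 iN ((z : Matrix (Fin n) (Fin n) R) i0 iN) := by
    intro z
    constructor
    · intro hz
      obtain ⟨m, rfl⟩ := Submodule.mem_span_singleton.mp hz
      have hcoe : ((m • E : S) : Matrix (Fin n) (Fin n) R)
          = (E : Matrix (Fin n) (Fin n) R) * ((MulOpposite.unop m : S) : Matrix (Fin n) (Fin n) R) := rfl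
      rw [hcoe, key i0 1 _ (MulOpposite.unop m).2]
      simp [Matrix.single]
    · intro hz
      refine Submodule.mem_span_singleton.mpr
        ⟨MulOpposite.op ⟨Matrix.single iN iN ((z : Matrix (Fin n) (Fin n) R) i0 iN),
          hmemStd iN _ le_rfl⟩, ?_⟩
      apply Subtype.ext
      show (E : Matrix (Fin n) (Fin n) R)
          * Matrix.single iN iN ((z : Matrix (Fin n) (Fin n) R) i0 iN)
          = (z : Matrix (Fin n) (Fin n) R)
      rw [key i0 1 _ (hmemStd iN _ le_rfl), hz]
      simp [Matrix.single]
  -- the homomorphism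
  let f : I →ₗ[Sᵐᵒᵖ] S :=
    { toFun := fun z => ⟨Matrix.single iN iN (((z : S) : Matrix (Fin n) (Fin n) R) i0 iN),
        hmemStd iN _ le_rfl⟩
      map_add' := by
        intro x y
        apply Subtype.ext
        show Matrix.single iN iN ((((x : S) : Matrix (Fin n) (Fin n) R)
            + ((y : S) : Matrix (Fin n) (Fin n) R)) i0 iN) = _
        rw [Matrix.add_apply, Matrix.single_add]
        rfl
      map_smul' := by
        intro m z
        apply Subtype.ext
        have hz := (memI z.1).mp z.2
        show Matrix.single iN iN ((((z : S) : Matrix (Fin n) (Fin n) R)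
            * ((MulOpposite.unop m : S) : Matrix (Fin n) (Fin n) R)) i0 iN)
            = Matrix.single iN iN (((z : S) : Matrix (Fin n) (Fin n) R) i0 iN)
            * ((MulOpposite.unop m : S) : Matrix (Fin n) (Fin n) R)
        rw [key iN _ _ (MulOpposite.unop m).2]
        conv_lhs => rw [hz]
        rw [key i0 _ _ (MulOpposite.unop m).2]
        simp [Matrix.single]
      }
  -- I is small
  have hsmall : IsSmallRightIdeal I := by
    intro K hK
    have h1 : (1 : S) ∈ I ⊔ K := hK ▸ Submodule.mem_top
    obtain ⟨a, haI, b, hbK, hab⟩ := Submodule.mem_sup.mp h1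
    have ha2 : a * a = 0 := by
      have hc := (memI a).mp haI
      apply Subtype.ext
      show (a : Matrix (Fin n) (Fin n) R) * (a : Matrix (Fin n) (Fin n) R) = 0
      rw [hc, key i0 _ _ (hmemStd i0 _ (le_of_lt hi0N))]
      have h0' : (Matrix.single i0 iN ((a : Matrix (Fin n) (Fin n) R) i0 iN)) iN iN = 0 := by
        simp only [Matrix.single, Matrix.of_apply]
        rw [if_neg]
        rintro ⟨h, -⟩
        exact absurd h (ne_of_lt hi0N)
      rw [h0', mul_zero, Matrix.single_zero]
    have hbeq : b = 1 - a := by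
      rw [← hab]; abel
    have hunit : b * (1 + a) = 1 := by
      have : b * (1 + a) = 1 + a - a - a * a := by rw [hbeq]; noncomm_ring
      rw [this, ha2]; abel
    have h1K : (1 : S) ∈ K := by
      rw [← hunit]
      exact Submodule.smul_mem K (MulOpposite.op (1 + a)) hbK
    rw [Submodule.eq_top_iff']
    intro x
    have := Submodule.smul_mem K (MulOpposite.op x) h1K
    rwa [op_smul_eq_mul, one_mul] at this
  -- apply small injectivity and derive contradiction
  obtain ⟨g, hg⟩ := hsi I hsmall f
  have hE : E ∈ I := Submodule.mem_span_singleton_self E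
  have h1 : g E = f ⟨E, hE⟩ := hg ⟨E, hE⟩
  have h2 : g E = g 1 * E := by
    have h' : g (MulOpposite.op E • (1 : S)) = MulOpposite.op E • g 1 := map_smul g _ _
    rw [op_smul_eq_mul, op_smul_eq_mul, one_mul] at h'
    exact h'
  have h3 : ((f ⟨E, hE⟩ : S) : Matrix (Fin n) (Fin n) R) iN iN = 1 := by
    show (Matrix.single iN iN ((E : Matrix (Fin n) (Fin n) R) i0 iN)) iN iN = 1
    simp [Matrix.single, E]
  have h4 : ((g 1 * E : S) : Matrix (Fin n) (Fin n) R) iN iN = 0 := by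
    rw [Subring.coe_mul, Matrix.mul_apply]
    apply Finset.sum_eq_zero
    intro k _
    by_cases hk : i0 = k
    · subst hk
      rw [(g 1 : S).2 iN i0 hi0N, zero_mul]
    · have hE0 : ((E : S) : Matrix (Fin n) (Fin n) R) k iN = 0 := by
        show Matrix.single i0 iN (1 : R) k iN = 0
        simp only [Matrix.single, Matrix.of_apply]
        rw [if_neg]
        rintro ⟨h, -⟩
        exact hk h
      rw [hE0, mul_zero]
  rw [h1] at h2
  rw [h2] at h3
  rw [h4] at h3
  exact zero_ne_one h3
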